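/- Let E be a semilattice in which every element lies below a maximal element, and let F ⊆ E be a subsemilattice containing all maximal elements of E. Let K = { e ∈ E : ∃ f ∈ F, f ≤ e }. Then K is a single congruence class of the congruence τ = ⟨F × F⟩ generated on E by identifying all elements of F. -/
import Mathlib


class InverseSemigroup (S : Type*) extends Semigroup S where
  inv : S → S
  mul_inv_mul : ∀ a : S, a * inv a * a = a
  inv_mul_inv : ∀ a : S, inv a * a * inv a = inv a
  inv_unique : ∀ a b : S, a * b * a = a → b * a * b = b → b = inv a

open InverseSemigroup

/-- `e` is an idempotent. -/
def IsIdem {S : Type*} [Mul S] (e : S) : Prop := e * e = e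

/-- `r` is a left congruence: an equivalence relation compatible with left multiplication. -/
def IsLeftCongruence {S : Type*} [Semigroup S] (r : S → S → Prop) : Prop :=
  Equivalence r ∧ ∀ a b c : S, r a b → r (c * a) (c * b)

/-- The inverse kernel of a relation: elements related to `a * a⁻¹`. -/
def InK {S : Type*} [InverseSemigroup S] (r : S → S → Prop) : Set S :=
  {a | r a (a * inv a)}

/-- The kernel: elements related to some idempotent. -/
def lker {S : Type*} [InverseSemigroup S] (r : S → S → Prop) : Set S :=
  {a | ∃ e, IsIdem e ∧ r a e}

/-- `τ` is a congruence on the semilattice of idempotents `E(S)`. -/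
def IsECong {S : Type*} [InverseSemigroup S] (τ : S → S → Prop) : Prop :=
  (∀ e f, τ e f → IsIdem e ∧ IsIdem f) ∧
  (∀ e, IsIdem e → τ e e) ∧
  (∀ e f, τ e f → τ f e) ∧
  (∀ e f g, τ e f → τ f g → τ e g) ∧
  (∀ e f g, IsIdem g → τ e f → τ (g * e) (g * f))

/-- The normaliser of a congruence on the idempotents. -/
def normaliser {S : Type*} [InverseSemigroup S] (τ : S → S → Prop) : Set S :=
  {a | ∀ e f, τ e f → τ (a * e * inv a) (a * f * inv a) ∧ τ (inv a * e * a) (inv a * f * a)}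

/-- `T` is a full inverse subsemigroup of `S`. -/
def IsFullInverseSub {S : Type*} [InverseSemigroup S] (T : Set S) : Prop :=
  (∀ e : S, IsIdem e → e ∈ T) ∧ (∀ a b, a ∈ T → b ∈ T → a * b ∈ T) ∧
  (∀ a, a ∈ T → inv a ∈ T)

theorem stmt19 {E : Type*} [CommSemigroup E] [Nonempty E]
    (idem : ∀ e : E, e * e = e)
    (hmax : ∀ e : E, ∃ m : E, (∀ x, m * x = m → x = m) ∧ e * m = e)
    (F : Set E) (hF : ∀ a ∈ F, ∀ b ∈ F, a * b ∈ F)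
    (hFmax : ∀ m : E, (∀ x, m * x = m → x = m) → m ∈ F) :
    let τ : E → E → Prop := fun a b => ∀ σ : E → E → Prop,
      (Equivalence σ ∧ ∀ x y c : E, σ x y → σ (c * x) (c * y)) →
      (∀ x ∈ F, ∀ y ∈ F, σ x y) → σ a b
    let K : Set E := {e | ∃ f ∈ F, f * e = f}
    K.Nonempty ∧ (∀ g ∈ K, ∀ h ∈ K, τ g h) ∧ (∀ g h : E, τ g h → h ∈ K → g ∈ K) := by

  intro τ K
  -- K is upward closed and closed under multiplication
  have hup : ∀ a b : E, a ∈ K → a * b = a → b ∈ K := by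
    rintro a b ⟨f, hf, hfa⟩ hab
    exact ⟨f, hf, by rw [← hfa, mul_assoc, hab]⟩
  have hmulK : ∀ a b : E, a ∈ K → b ∈ K → a * b ∈ K := by
    rintro a b ⟨f, hf, hfa⟩ ⟨g, hg, hgb⟩
    refine ⟨f * g, hF f hf g hg, ?_⟩
    calc f * g * (a * b) = (f * a) * (g * b) := by
          rw [mul_assoc, ← mul_assoc g a b, mul_comm g a, mul_assoc a g b, ← mul_assoc]
      _ = f * g := by rw [hfa, hgb]
  have hFK : ∀ f ∈ F, f ∈ K := fun f hf => ⟨f, hf, idem f⟩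
  refine ⟨?_, ?_, ?_⟩
  · obtain ⟨e⟩ := ‹Nonempty E›
    obtain ⟨m, hm, -⟩ := hmax e
    exact ⟨m, hFK m (hFmax m hm)⟩
  · rintro g ⟨f, hf, hfg⟩ h ⟨f', hf', hf'h⟩
    intro σ ⟨heq, hcomp⟩ hFσ
    -- find maximal elements above g and h
    obtain ⟨m, hm, hgm⟩ := hmax g
    obtain ⟨m', hm', hhm'⟩ := hmax h
    have hmF := hFmax m hm
    have hm'F := hFmax m' hm'
    -- σ g f : since σ m f, so σ (g*m) (g*f), g*m = g, g*f = f
    have h1 : σ g f := by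
      have := hcomp m f g (hFσ m hmF f hf)
      rwa [hgm, mul_comm g f, hfg] at this
    have h2 : σ h f' := by
      have := hcomp m' f' h (hFσ m' hm'F f' hf')
      rwa [hhm', mul_comm h f', hf'h] at this
    exact heq.trans h1 (heq.trans (hFσ f hf f' hf') (heq.symm h2))
  · intro g h hτ hK
    have := hτ (fun a b => a ∈ K ↔ b ∈ K)
      ⟨⟨fun _ => Iff.rfl, fun h => h.symm, fun h1 h2 => h1.trans h2⟩, ?_⟩
      (fun x hx y hy => by simp [hFK x hx, hFK y hy])
    · exact this.mpr hK
    · intro x y c hxy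
      have key : ∀ u v : E, c * u ∈ K → u ∈ K ∧ c ∈ K := by
        intro u v hcu
        constructor
        · exact hup _ _ hcu (by rw [mul_assoc, idem u])
        · exact hup _ _ hcu (by rw [mul_assoc, mul_comm u c, ← mul_assoc, idem])
      constructor
      · intro hcx
        obtain ⟨hx, hc⟩ := key x x hcx
        exact hmulK c y hc (hxy.mp hx)
      · intro hcy
        obtain ⟨hy, hc⟩ := key y y hcy
        exact hmulK c x hc (hxy.mpr hy)
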